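/- Define a verifier-leading Stackelberg equilibrium (v*, τ*, τ'*) as: (1) τ* and τ'* are best responses to v* under rewards r(v*(x,z), faith(x,z)) and r(v*(x,z), 1-c(x,z)) respectively, pointwise for every x; and (2) v* maximizes R_V(v) = -(1/2)·(1/|X|)·Σ_x [l(v(x,τ_v(x)), c(x,τ_v(x))) + l(v(x,τ'_v(x)), c(x,τ'_v(x)))] where τ_v, τ'_v denote best responses to v (assume best responses to every v exist and R_V is well-defined for some fixed selection). Under the assumptions: X finite nonempty; l ≥ 0 with l(a,b)=0 iff a=b; r(v₁,1) > r(v₂,0) for all v₁,v₂ with r(·,1) strictly increasing; for every x there exists z with c(x,z)=0 and there exists z with faith(x,z)=1; and faith(x,z)=1 with solver-incorrect x implies c(x,z)=0 while faith(x,z)=1 with solver-correct x implies c(x,z)=1: there exists a tuple (v*, τ*, τ'*) that is a Stackelberg equilibrium and such that τ* is faithful, and (v*, τ*) satisfies completeness and soundness. -/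
import Mathlib


/-- sufficiency direction of Theorem 1: under the stated assumptions
there exists a verifier-leading Stackelberg equilibrium `(v*, τ*, τ'*)` such that
`τ*` is faithful and `(v*, τ*)` satisfies completeness and soundness. The verifier's
utility `R_V` is defined via a fixed selection `selτ, selτ'` of best responses to
every verifier (assumed to exist). -/
theorem decoupled_pvg_equilibrium_exists
    {X Z : Type*} [Fintype X] [Nonempty X]
    (c faith : X → Z → ℝ) (cs : X → ℝ)
    (l r : ℝ → ℝ → ℝ)
    -- value constraints
    (hc : ∀ x z, c x z = 0 ∨ c x z = 1)
    (hfaith_val : ∀ x z, faith x z = 0 ∨ faith x z = 1)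
    (hcs : ∀ x, cs x = 0 ∨ cs x = 1)
    -- loss assumptions
    (hl_nonneg : ∀ a b, 0 ≤ l a b)
    (hl_zero : ∀ a b, l a b = 0 ↔ a = b)
    -- reward assumptions
    (hr_sep : ∀ v₁ v₂ : ℝ, v₁ ∈ Set.Icc (0:ℝ) 1 → v₂ ∈ Set.Icc (0:ℝ) 1 →
      r v₁ 1 > r v₂ 0)
    (hr_mono : ∀ v₁ v₂ : ℝ, v₁ ∈ Set.Icc (0:ℝ) 1 → v₂ ∈ Set.Icc (0:ℝ) 1 →
      v₁ > v₂ → r v₁ 1 > r v₂ 1)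
    -- richness of the output space
    (hex_incorrect : ∀ x, ∃ z : Z, c x z = 0)
    (hex_faithful : ∀ x, ∃ z : Z, faith x z = 1)
    -- faithfulness/correctness dichotomy with respect to the solver
    (hsolver_incorrect : ∀ x, cs x = 0 → ∀ z, faith x z = 1 → c x z = 0)
    (hsolver_correct : ∀ x, cs x = 1 → ∀ z, faith x z = 1 → c x z = 1)
    -- a fixed selection of best responses to every verifier
    (selτ selτ' : (X → Z → ℝ) → X → Z)
    (hselτ : ∀ v : X → Z → ℝ, (∀ x z, v x z ∈ Set.Icc (0:ℝ) 1) →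
      ∀ x, ∀ z : Z, r (v x z) (faith x z) ≤ r (v x (selτ v x)) (faith x (selτ v x)))
    (hselτ' : ∀ v : X → Z → ℝ, (∀ x z, v x z ∈ Set.Icc (0:ℝ) 1) →
      ∀ x, ∀ z : Z,
        r (v x z) (1 - c x z) ≤ r (v x (selτ' v x)) (1 - c x (selτ' v x)))
    -- the verifier utility, for a verifier together with a pair of translators
    (RV : (X → Z → ℝ) → (X → Z) → (X → Z) → ℝ)
    (hRV : ∀ (v : X → Z → ℝ) (σ σ' : X → Z),
      RV v σ σ' = -(1/2) * (1 / (Fintype.card X : ℝ)) *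
        ∑ x : X, (l (v x (σ x)) (c x (σ x)) + l (v x (σ' x)) (c x (σ' x)))) :
    ∃ (vs : X → Z → ℝ) (τs τs' : X → Z),
      (∀ x z, vs x z ∈ Set.Icc (0:ℝ) 1) ∧
      -- (1) τ* and τ'* are pointwise best responses to v*
      (∀ x, ∀ z : Z,
        r (vs x z) (faith x z) ≤ r (vs x (τs x)) (faith x (τs x))) ∧
      (∀ x, ∀ z : Z,
        r (vs x z) (1 - c x z) ≤ r (vs x (τs' x)) (1 - c x (τs' x))) ∧
      -- (2) v* maximizes R_V over all verifiers (with the fixed selection of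
      -- best responses to the other verifiers)
      (∀ v : X → Z → ℝ, (∀ x z, v x z ∈ Set.Icc (0:ℝ) 1) →
        RV v (selτ v) (selτ' v) ≤ RV vs τs τs') ∧
      -- τ* is faithful
      (∀ x, faith x (τs x) = 1) ∧
      -- completeness for (v*, τ*)
      (∀ x, c x (τs x) = 1 → vs x (τs x) = 1) ∧
      -- soundness for v*
      (∀ x, ∀ z : Z, c x z = 0 → vs x z = 0) := by
  classical
  refine ⟨c, fun x => (hex_faithful x).choose, fun x => (hex_incorrect x).choose,
    ?_, ?_, ?_, ?_, ?_, ?_, ?_⟩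
  · intro x z
    rcases hc x z with h | h <;> simp [h]
  · -- τ* best response
    intro x z
    have hfτ : faith x (hex_faithful x).choose = 1 := (hex_faithful x).choose_spec
    rcases hfaith_val x z with hf | hf
    · rw [hf, hfτ]
      exact le_of_lt (hr_sep _ _ (by rcases hc x (hex_faithful x).choose with h | h <;> simp [h])
        (by rcases hc x z with h | h <;> simp [h]))
    · rw [hf, hfτ]
      have : c x z = c x (hex_faithful x).choose := by
        rcases hcs x with hs | hs
        · rw [hsolver_incorrect x hs z hf, hsolver_incorrect x hs _ hfτ]
        · rw [hsolver_correct x hs z hf, hsolver_correct x hs _ hfτ]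
      rw [this]
  · -- τ'* best response
    intro x z
    have hcτ : c x (hex_incorrect x).choose = 0 := (hex_incorrect x).choose_spec
    rw [hcτ]
    rcases hc x z with h | h
    · rw [h]
    · rw [h]
      norm_num
      exact le_of_lt (hr_sep 0 1 (by norm_num) (by norm_num))
  · -- v* maximizes R_V
    intro v hv
    rw [hRV, hRV]
    have h0 : ∑ x : X, (l (c x ((fun x => (hex_faithful x).choose) x))
        (c x ((fun x => (hex_faithful x).choose) x)) +
        l (c x ((fun x => (hex_incorrect x).choose) x))
        (c x ((fun x => (hex_incorrect x).choose) x))) = 0 := by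
      apply Finset.sum_eq_zero
      intro x _
      simp [(hl_zero _ _).mpr rfl]
    rw [h0]
    have hsum : 0 ≤ ∑ x : X, (l (v x (selτ v x)) (c x (selτ v x)) +
        l (v x (selτ' v x)) (c x (selτ' v x))) := by
      apply Finset.sum_nonneg
      intro x _
      exact add_nonneg (hl_nonneg _ _) (hl_nonneg _ _)
    have hcard : (0:ℝ) < (Fintype.card X : ℝ) := by
      exact_mod_cast Fintype.card_pos
    have hnn : 0 ≤ (1/2) * (1 / (Fintype.card X : ℝ)) *
        ∑ x : X, (l (v x (selτ v x)) (c x (selτ v x)) +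
          l (v x (selτ' v x)) (c x (selτ' v x))) :=
      mul_nonneg (by positivity) hsum
    nlinarith [hnn]
  · intro x; exact (hex_faithful x).choose_spec
  · intro x h; exact h
  · intro x z h; exact h
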